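/- For every integer ℓ with 1 ≤ ℓ ≤ n−1 there exist constants ε_0 = ε_0(n,ℓ) > 0 and c = c(n,ℓ) > 0 such that for every ε ∈ (0, ε_0) one has c · ε^{nℓ} ≤ μ_X({Λ ∈ X : β_ℓ(Λ) ≤ ε}) and c · ε^n ≤ μ_X({Λ ∈ X : ∏_{j=1}^ℓ β_j(Λ) ≤ ε}). -/

import Mathlib

open MeasureTheory Matrix Filter Topology
open scoped NNReal ENNReal

noncomputable section

/-- `G = SL_n(ℝ)`, with its natural topology as a subtype of the space of matrices. -/
instance SLtop (n : ℕ) : TopologicalSpace (Matrix.SpecialLinearGroup (Fin n) ℝ) :=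
  instTopologicalSpaceSubtype

/-- `Γ = SL_n(ℤ)`, viewed as a subgroup of `G = SL_n(ℝ)`. -/
def SLZ (n : ℕ) : Subgroup (Matrix.SpecialLinearGroup (Fin n) ℝ) :=
  (Matrix.SpecialLinearGroup.map (n := Fin n) (Int.castRingHom ℝ)).range

/-- `X = Γ \ G`, the space of right cosets `Γg`. -/
def XSpace (n : ℕ) : Type :=
  Quotient (QuotientGroup.rightRel (SLZ n))

instance XSpaceTop (n : ℕ) : TopologicalSpace (XSpace n) :=
  instTopologicalSpaceQuotient

/-- `X` is equipped with its Borel σ-algebra. -/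
instance XSpaceMeas (n : ℕ) : MeasurableSpace (XSpace n) := borel _

/-- The right action of `G` on `X = Γ\G`, `(Γh)·g = Γ(hg)`. -/
def xmul {n : ℕ} (x : XSpace n) (g : Matrix.SpecialLinearGroup (Fin n) ℝ) : XSpace n :=
  Quotient.mk (QuotientGroup.rightRel (SLZ n)) (Quotient.out x * g)

/-- The lattice `ℤ^n · g ⊆ ℝ^n` attached to `g ∈ SL_n(ℝ)` (row vectors, acted on by
right matrix multiplication), viewed inside Euclidean space. -/
def latticeOf {n : ℕ} (g : Matrix.SpecialLinearGroup (Fin n) ℝ) :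
    Set (EuclideanSpace ℝ (Fin n)) :=
  {v | ∃ m : Fin n → ℤ,
      v = (WithLp.equiv 2 (Fin n → ℝ)).symm
        (Matrix.vecMul (fun i => (m i : ℝ)) (g : Matrix (Fin n) (Fin n) ℝ))}

/-- The lattice attached to a point of `X = Γ\G`; this is well defined since
`ℤ^n · γ = ℤ^n` for `γ ∈ SL_n(ℤ)`, so the choice of representative is immaterial. -/
def latticeX {n : ℕ} (x : XSpace n) : Set (EuclideanSpace ℝ (Fin n)) :=
  latticeOf (Quotient.out x)

/-- `beta k x` is the `k`-th successive minimum (`1`-based) of the lattice attached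
to `x`, with respect to the Euclidean norm:
`β_k(Λ) = inf {r > 0 : dim span (B_r ∩ Λ) ≥ k}`. -/
def beta {n : ℕ} (k : ℕ) (x : XSpace n) : ℝ :=
  sInf {r : ℝ | 0 < r ∧
    k ≤ Module.finrank ℝ
      ↥(Submodule.span ℝ (Metric.closedBall (0 : EuclideanSpace ℝ (Fin n)) r ∩ latticeX x))}

/-- The Siegel-type transform `^kF^` : the sum of `F` over all `k`-tuples of nonzero
vectors of the lattice attached to `x`, with values in `[0,∞]`. -/
def siegelHat {n : ℕ} (k : ℕ) (F : (Fin k → EuclideanSpace ℝ (Fin n)) → ℝ≥0)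
    (x : XSpace n) : ℝ≥0∞ :=
  ∑' v : Fin k → {w : EuclideanSpace ℝ (Fin n) // w ∈ latticeX x ∧ w ≠ 0},
    (F (fun i => (v i : EuclideanSpace ℝ (Fin n))) : ℝ≥0∞)

/-- The Siegel-type transform `^kF~` : the sum of `F` over all `k`-tuples of vectors
of the lattice attached to `x` whose real span has dimension `k`, with values in `[0,∞]`. -/
def siegelTilde {n : ℕ} (k : ℕ) (F : (Fin k → EuclideanSpace ℝ (Fin n)) → ℝ≥0)
    (x : XSpace n) : ℝ≥0∞ :=
  ∑' v : {v : Fin k → EuclideanSpace ℝ (Fin n) //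
      (∀ i, v i ∈ latticeX x) ∧
      Module.finrank ℝ ↥(Submodule.span ℝ (Set.range v)) = k},
    (F v.1 : ℝ≥0∞)

/-- The (`ℝ≥0`-valued) indicator function of a product set `A_1 × ⋯ × A_k ⊆ (ℝ^n)^k`. -/
def boxIndicator {n : ℕ} {k : ℕ} (A : Fin k → Set (EuclideanSpace ℝ (Fin n))) :
    (Fin k → EuclideanSpace ℝ (Fin n)) → ℝ≥0 :=
  (Set.univ.pi A).indicator 1

/-- The function `R_M = (^ℓ 1_{E_M^ℓ})^ − M^ℓ · 1_X` on `X` (real-valued). -/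
def RMfun {n : ℕ} (ℓ : ℕ) (E : ℝ → Set (EuclideanSpace ℝ (Fin n))) (M : ℝ)
    (x : XSpace n) : ℝ :=
  (siegelHat ℓ (boxIndicator fun _ : Fin ℓ => E M) x).toReal - M ^ ℓ

/-- The Epstein zeta function `ζ_E(Λ, s) = ∑_{v ∈ Λ∖{0}} ‖v‖^{-2s}` of the lattice
attached to `x`. -/
def epsteinZeta {n : ℕ} (x : XSpace n) (s : ℝ) : ℝ :=
  ∑' v : {w : EuclideanSpace ℝ (Fin n) // w ∈ latticeX x ∧ w ≠ 0},
    ‖(v : EuclideanSpace ℝ (Fin n))‖ ^ (-2 * s)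

/-- The right action of `g ∈ SL_n(ℝ)` on a row vector `v ∈ ℝ^n`, `v ↦ v·g`,
viewed as a map of Euclidean space. -/
def rAct {n : ℕ} (g : Matrix.SpecialLinearGroup (Fin n) ℝ)
    (v : EuclideanSpace ℝ (Fin n)) : EuclideanSpace ℝ (Fin n) :=
  (WithLp.equiv 2 (Fin n → ℝ)).symm
    (Matrix.vecMul ((WithLp.equiv 2 (Fin n → ℝ)) v) (g : Matrix (Fin n) (Fin n) ℝ))

namespace Stmt9Aux

variable {n : ℕ}

abbrev SL (n : ℕ) := Matrix.SpecialLinearGroup (Fin n) ℝ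

/-- projection G → X -/
def pr (n : ℕ) (g : SL n) : XSpace n :=
  Quotient.mk (QuotientGroup.rightRel (SLZ n)) g

lemma pr_eq_of_mem {γ h : SL n} (hγ : γ ∈ SLZ n) : pr n (γ * h) = pr n h := by
  have : (QuotientGroup.rightRel (SLZ n)) (γ * h) h := by
    rw [QuotientGroup.rightRel_apply]
    simpa using hγ
  exact Quotient.sound this

lemma pr_out (x : XSpace n) : pr n (Quotient.out x) = x := Quotient.out_eq x

lemma out_pr (h : SL n) : ∃ γ ∈ SLZ n, Quotient.out (pr n h) = γ * h := by
  have h1 : (QuotientGroup.rightRel (SLZ n)) (Quotient.out (pr n h)) h :=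
    Quotient.exact (Quotient.out_eq _)
  rw [QuotientGroup.rightRel_apply] at h1
  refine ⟨(Quotient.out (pr n h)) * h⁻¹, ?_, by group⟩
  have := (SLZ n).inv_mem h1
  simpa using this

lemma xmul_pr (h g : SL n) : xmul (pr n h) g = pr n (h * g) := by
  obtain ⟨γ, hγ, hout⟩ := out_pr h
  show Quotient.mk _ (Quotient.out (pr n h) * g) = _
  rw [hout, mul_assoc]
  exact pr_eq_of_mem hγ

lemma latticeOf_gamma_subset (γ₀ : Matrix.SpecialLinearGroup (Fin n) ℤ) (h : SL n) :
    latticeOf ((Matrix.SpecialLinearGroup.map (n := Fin n) (Int.castRingHom ℝ) γ₀) * h)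
      ⊆ latticeOf h := by
  rintro v ⟨m, rfl⟩
  refine ⟨Matrix.vecMul m γ₀.1, ?_⟩
  congr 1
  rw [Matrix.SpecialLinearGroup.coe_mul, ← Matrix.vecMul_vecMul]
  have hv : ((fun i => ((m i : ℝ))) ᵥ* ((Matrix.SpecialLinearGroup.map (n := Fin n)
      (Int.castRingHom ℝ) γ₀) : Matrix (Fin n) (Fin n) ℝ))
      = fun i => ((Matrix.vecMul m γ₀.1) i : ℝ) := by
    funext i
    exact ((Int.castRingHom ℝ).map_vecMul (γ₀.1) m i).symm
  rw [hv]

lemma latticeOf_gamma (γ₀ : Matrix.SpecialLinearGroup (Fin n) ℤ) (h : SL n) :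
    latticeOf ((Matrix.SpecialLinearGroup.map (n := Fin n) (Int.castRingHom ℝ) γ₀) * h)
      = latticeOf h := by
  apply Set.Subset.antisymm (latticeOf_gamma_subset γ₀ h)
  have h2 := latticeOf_gamma_subset γ₀⁻¹
    ((Matrix.SpecialLinearGroup.map (n := Fin n) (Int.castRingHom ℝ) γ₀) * h)
  rw [← mul_assoc, ← _root_.map_mul, inv_mul_cancel, _root_.map_one, one_mul] at h2
  exact h2

lemma latticeX_pr (h : SL n) : latticeX (pr n h) = latticeOf h := by
  obtain ⟨γ, hγ, hout⟩ := out_pr h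
  obtain ⟨γ₀, rfl⟩ := hγ
  show latticeOf _ = _
  rw [hout]
  exact latticeOf_gamma γ₀ h

end Stmt9Aux

namespace Stmt9Aux

/-- `i`-th row of a matrix, as a point of Euclidean space. -/
def rowv {n : ℕ} (M : Matrix (Fin n) (Fin n) ℝ) (i : Fin n) : EuclideanSpace ℝ (Fin n) :=
  (WithLp.equiv 2 (Fin n → ℝ)).symm (M i)

variable {n : ℕ}

lemma rowv_mem (g : SL n) (i : Fin n) : rowv (g : Matrix (Fin n) (Fin n) ℝ) i ∈ latticeOf g := by
  refine ⟨Pi.single i 1, ?_⟩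
  unfold rowv
  congr 1
  funext j
  simp [Matrix.vecMul, dotProduct, Pi.single_apply]

lemma norm_rowv_le {M : Matrix (Fin n) (Fin n) ℝ} {i : Fin n} {b : ℝ} (hb : 0 ≤ b)
    (h : ∀ j, |M i j| ≤ b) : ‖rowv M i‖ ≤ Real.sqrt n * b := by
  rw [show ((n:ℝ)) = ((n:ℝ)) from rfl]
  have h1 : ‖rowv M i‖ = Real.sqrt (∑ j, ‖M i j‖ ^ 2) := by
    rw [EuclideanSpace.norm_eq]
    congr 1
  rw [h1]
  have h2 : (∑ j, ‖M i j‖ ^ 2) ≤ (n : ℝ) * b ^ 2 := by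
    calc (∑ j, ‖M i j‖ ^ 2) ≤ ∑ _j : Fin n, b ^ 2 := by
          apply Finset.sum_le_sum
          intro j _
          have := h j
          rw [Real.norm_eq_abs]
          nlinarith [abs_nonneg (M i j)]
      _ = (n : ℝ) * b ^ 2 := by simp [Finset.sum_const, nsmul_eq_mul]
  calc Real.sqrt (∑ j, ‖M i j‖ ^ 2) ≤ Real.sqrt ((n:ℝ) * b ^ 2) := Real.sqrt_le_sqrt h2
    _ = Real.sqrt n * b := by
        rw [Real.sqrt_mul (by positivity), Real.sqrt_sq hb]

lemma rows_li (g : SL n) : LinearIndependent ℝ (fun i => (g : Matrix (Fin n) (Fin n) ℝ) i) := by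
  rw [Fintype.linearIndependent_iff]
  intro c hc i
  have hsum : Matrix.vecMul c (g : Matrix (Fin n) (Fin n) ℝ) = 0 := by
    funext j
    have := congrFun hc j
    simpa [Matrix.vecMul, dotProduct, Finset.sum_apply] using this
  have h2 : Matrix.vecMul c ((g : Matrix (Fin n) (Fin n) ℝ) * ((g⁻¹ : SL n) : Matrix (Fin n) (Fin n) ℝ)) = 0 := by
    rw [← Matrix.vecMul_vecMul, hsum]
    simp
  rw [← Matrix.SpecialLinearGroup.coe_mul, mul_inv_cancel] at h2
  simpa using congrFun h2 i

lemma rowv_li (g : SL n) : LinearIndependent ℝ (rowv (g : Matrix (Fin n) (Fin n) ℝ)) := by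
  have h1 := (rows_li g).map' ((WithLp.linearEquiv 2 ℝ (Fin n → ℝ)).symm.toLinearMap)
    (LinearEquiv.ker _)
  exact h1

/-- the defining set for `beta` -/
lemma mem_betaSet {g : SL n} {k : ℕ} (e : Fin k → Fin n) (he : Function.Injective e)
    {r : ℝ} (hr : 0 < r) (hnorm : ∀ a, ‖rowv (g : Matrix (Fin n) (Fin n) ℝ) (e a)‖ ≤ r) :
    r ∈ {r : ℝ | 0 < r ∧
      k ≤ Module.finrank ℝ
        ↥(Submodule.span ℝ
          (Metric.closedBall (0 : EuclideanSpace ℝ (Fin n)) r ∩ latticeX (pr n g)))} := by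
  refine ⟨hr, ?_⟩
  set F : Fin k → EuclideanSpace ℝ (Fin n) := fun a => rowv (g : Matrix (Fin n) (Fin n) ℝ) (e a)
  have hFli : LinearIndependent ℝ F := (rowv_li g).comp e he
  have hsub : Set.range F ⊆
      Metric.closedBall (0 : EuclideanSpace ℝ (Fin n)) r ∩ latticeX (pr n g) := by
    rintro v ⟨a, rfl⟩
    refine ⟨mem_closedBall_zero_iff.2 (hnorm a), ?_⟩
    rw [latticeX_pr]
    exact rowv_mem g (e a)
  have h1 : Module.finrank ℝ ↥(Submodule.span ℝ (Set.range F)) = k := by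
    rw [finrank_span_eq_card hFli, Fintype.card_fin]
  calc k = Module.finrank ℝ ↥(Submodule.span ℝ (Set.range F)) := h1.symm
    _ ≤ _ := Submodule.finrank_mono (Submodule.span_mono hsub)

lemma beta_le_of_rows {g : SL n} {k : ℕ} (e : Fin k → Fin n) (he : Function.Injective e)
    {r : ℝ} (hr : 0 < r) (hnorm : ∀ a, ‖rowv (g : Matrix (Fin n) (Fin n) ℝ) (e a)‖ ≤ r) :
    beta k (pr n g) ≤ r :=
  csInf_le ⟨0, fun _ hy => hy.1.le⟩ (mem_betaSet e he hr hnorm)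

lemma beta_nonneg (k : ℕ) (x : XSpace n) : 0 ≤ beta k x :=
  Real.sInf_nonneg (fun _ hy => hy.1.le)

lemma betaSet_nonempty {k : ℕ} (hk : k ≤ n) (x : XSpace n) :
    {r : ℝ | 0 < r ∧
      k ≤ Module.finrank ℝ
        ↥(Submodule.span ℝ
          (Metric.closedBall (0 : EuclideanSpace ℝ (Fin n)) r ∩ latticeX x))}.Nonempty := by
  set g : SL n := Quotient.out x with hg
  have hx : x = pr n g := (pr_out x).symm
  set r : ℝ := (∑ i, ‖rowv (g : Matrix (Fin n) (Fin n) ℝ) i‖) + 1 with hr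
  have hrpos : 0 < r := by
    have : 0 ≤ ∑ i, ‖rowv (g : Matrix (Fin n) (Fin n) ℝ) i‖ :=
      Finset.sum_nonneg fun i _ => norm_nonneg _
    linarith
  have hnorm : ∀ a : Fin k, ‖rowv (g : Matrix (Fin n) (Fin n) ℝ) (Fin.castLE hk a)‖ ≤ r := by
    intro a
    have h1 : ‖rowv (g : Matrix (Fin n) (Fin n) ℝ) (Fin.castLE hk a)‖
        ≤ ∑ i, ‖rowv (g : Matrix (Fin n) (Fin n) ℝ) i‖ :=
      Finset.single_le_sum (f := fun i => ‖rowv (g : Matrix (Fin n) (Fin n) ℝ) i‖)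
        (fun i _ => norm_nonneg _) (Finset.mem_univ _)
    linarith
  rw [hx]
  exact ⟨r, mem_betaSet (Fin.castLE hk) (Fin.castLE_injective hk) hrpos hnorm⟩

lemma beta_mono {j k : ℕ} (hjk : j ≤ k) (hk : k ≤ n) (x : XSpace n) :
    beta j x ≤ beta k x := by
  apply csInf_le_csInf ⟨0, fun _ hy => hy.1.le⟩ (betaSet_nonempty hk x)
  rintro r ⟨hr, hrk⟩
  exact ⟨hr, le_trans hjk hrk⟩

end Stmt9Aux

namespace Stmt9Aux

section Blocks

variable {n ℓ : ℕ}

/-- matrices supported in the top-right `ℓ × (n-ℓ)` block -/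
def UpSet (ℓ : ℕ) (p : Matrix (Fin n) (Fin n) ℝ) : Prop :=
  ∀ i j : Fin n, ¬(i.1 < ℓ ∧ ℓ ≤ j.1) → p i j = 0

lemma UpSet.neg {p : Matrix (Fin n) (Fin n) ℝ} (hp : UpSet ℓ p) : UpSet ℓ (-p) :=
  fun i j hij => by simp [hp i j hij]

lemma UpSet.mul_eq_zero {p q : Matrix (Fin n) (Fin n) ℝ} (hp : UpSet ℓ p) (hq : UpSet ℓ q) :
    p * q = 0 := by
  ext i j
  rw [Matrix.mul_apply]
  have : ∀ k : Fin n, p i k * q k j = 0 := by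
    intro k
    by_cases hk : (k : ℕ) < ℓ
    · rw [hp i k (by omega), zero_mul]
    · rw [hq k j (by omega), mul_zero]
  simp [this]

lemma UpSet.one_add_mul {p q : Matrix (Fin n) (Fin n) ℝ} (hp : UpSet ℓ p) (hq : UpSet ℓ q) :
    (1 + p) * (1 + q) = 1 + (p + q) := by
  have h0 := hp.mul_eq_zero hq
  rw [Matrix.add_mul, Matrix.mul_add, Matrix.mul_add, h0]
  noncomm_ring

lemma UpSet.det_one_add {p : Matrix (Fin n) (Fin n) ℝ} (hp : UpSet ℓ p) :
    (1 + p).det = 1 := by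
  have htri : Matrix.BlockTriangular (1 + p) id := by
    intro i j hij
    have h1 : (1 : Matrix (Fin n) (Fin n) ℝ) i j = 0 := Matrix.one_apply_ne (by
      intro h; exact absurd h (by simp at hij ⊢; omega))
    have h2 : p i j = 0 := hp i j (by simp at hij; omega)
    simp [Matrix.add_apply, h1, h2]
  rw [Matrix.det_of_upperTriangular htri]
  have : ∀ i : Fin n, (1 + p) i i = 1 := by
    intro i
    have h2 : p i i = 0 := hp i i (by omega)
    simp [Matrix.add_apply, h2]
  simp [this]

/-- the unipotent upper-block matrix as an element of `SL n` -/
def npSL {p : Matrix (Fin n) (Fin n) ℝ} (hp : UpSet ℓ p) : SL n :=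
  ⟨1 + p, hp.det_one_add⟩

lemma npSL_coe {p : Matrix (Fin n) (Fin n) ℝ} (hp : UpSet ℓ p) :
    (npSL hp : Matrix (Fin n) (Fin n) ℝ) = 1 + p := rfl

/-- the diagonal element: `t^(n-ℓ)` on the first `ℓ` coordinates, `t^(-ℓ)` on the rest. -/
def dvec (n ℓ : ℕ) (t : ℝ) : Fin n → ℝ := fun i => if (i : ℕ) < ℓ then t ^ (n - ℓ) else (t ^ ℓ)⁻¹

lemma card_filter_lt (n ℓ : ℕ) (hℓ : ℓ ≤ n) :
    (Finset.univ.filter (fun i : Fin n => (i : ℕ) < ℓ)).card = ℓ := by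
  have : (Finset.univ.filter (fun i : Fin n => (i : ℕ) < ℓ))
      = Finset.image (Fin.castLE hℓ) Finset.univ := by
    ext k
    simp only [Finset.mem_filter, Finset.mem_univ, true_and, Finset.mem_image]
    constructor
    · intro hk
      exact ⟨⟨k.1, hk⟩, rfl⟩
    · rintro ⟨a, -, rfl⟩
      exact a.2
  rw [this, Finset.card_image_of_injective _ (Fin.castLE_injective hℓ)]
  simp

lemma det_diagonal_dvec {t : ℝ} (ht : t ≠ 0) (hℓ : ℓ ≤ n) :
    (Matrix.diagonal (dvec n ℓ t)).det = 1 := by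
  rw [Matrix.det_diagonal]
  unfold dvec
  rw [Finset.prod_ite]
  simp only [Finset.prod_const]
  rw [card_filter_lt n ℓ hℓ]
  have h2 : (Finset.univ.filter (fun i : Fin n => ¬ ((i:ℕ) < ℓ))).card = n - ℓ := by
    have := Finset.card_filter_add_card_filter_not
      (s := (Finset.univ : Finset (Fin n))) (p := fun i : Fin n => (i:ℕ) < ℓ)
    rw [card_filter_lt n ℓ hℓ] at this
    simp only [Fintype.card_fin, Finset.card_univ] at this
    omega
  rw [h2]
  have h3 : ((t ^ ℓ)⁻¹) ^ (n - ℓ) = (t ^ (ℓ * (n - ℓ)))⁻¹ := by rw [inv_pow, pow_mul]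
  rw [h3, ← pow_mul, Nat.mul_comm]
  exact mul_inv_cancel₀ (pow_ne_zero _ ht)

/-- the diagonal element of `SL n` -/
def atSL (hℓ : ℓ ≤ n) {t : ℝ} (ht : t ≠ 0) : SL n :=
  ⟨Matrix.diagonal (dvec n ℓ t), det_diagonal_dvec ht hℓ⟩

lemma atSL_coe (hℓ : ℓ ≤ n) {t : ℝ} (ht : t ≠ 0) :
    (atSL hℓ ht : Matrix (Fin n) (Fin n) ℝ) = Matrix.diagonal (dvec n ℓ t) := rfl

/-- top-left block -/
def TL (ℓ : ℕ) (hℓ : ℓ ≤ n) (u : Matrix (Fin n) (Fin n) ℝ) : Matrix (Fin ℓ) (Fin ℓ) ℝ :=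
  u.submatrix (Fin.castLE hℓ) (Fin.castLE hℓ)

/-- top-right block -/
def TR (ℓ : ℕ) (hℓ : ℓ ≤ n) (u : Matrix (Fin n) (Fin n) ℝ) : Matrix (Fin ℓ) (Fin (n - ℓ)) ℝ :=
  u.submatrix (Fin.castLE hℓ) (fun b => ⟨ℓ + b.1, by omega⟩)

/-- the correcting upper-block matrix `p*(u)` with `A·p* = B` (top blocks `A`,`B` of `u`). -/
def pstar (ℓ : ℕ) (hℓ : ℓ ≤ n) (u : Matrix (Fin n) (Fin n) ℝ) : Matrix (Fin n) (Fin n) ℝ :=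
  fun i j =>
    if h : (i : ℕ) < ℓ ∧ ℓ ≤ (j : ℕ) then
      ((TL ℓ hℓ u).det)⁻¹ *
        (((TL ℓ hℓ u).adjugate) * (TR ℓ hℓ u)) ⟨i.1, h.1⟩ ⟨j.1 - ℓ, by omega⟩
    else 0

lemma UpSet_pstar (hℓ : ℓ ≤ n) (u : Matrix (Fin n) (Fin n) ℝ) : UpSet ℓ (pstar ℓ hℓ u) :=
  fun i j hij => by simp [pstar, hij]

lemma sum_restrict (hℓ : ℓ ≤ n) (f : Fin n → ℝ) (hf : ∀ k : Fin n, ¬ (k : ℕ) < ℓ → f k = 0) :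
    ∑ k, f k = ∑ a : Fin ℓ, f (Fin.castLE hℓ a) := by
  rw [← Finset.sum_filter_of_ne (s := Finset.univ) (p := fun k : Fin n => (k : ℕ) < ℓ)
    (by intro x _ hx; by_contra hc; exact hx (hf x hc))]
  have himg : (Finset.univ.filter (fun i : Fin n => (i : ℕ) < ℓ))
      = Finset.image (Fin.castLE hℓ) Finset.univ := by
    ext k
    simp only [Finset.mem_filter, Finset.mem_univ, true_and, Finset.mem_image]
    constructor
    · intro hk
      exact ⟨⟨k.1, hk⟩, rfl⟩
    · rintro ⟨a, -, rfl⟩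
      exact a.2
  rw [himg, Finset.sum_image (fun a _ b _ h => Fin.castLE_injective hℓ h)]

/-- Key cancellation: multiplying by `1 - p*` kills the top-right block. -/
lemma mul_one_sub_pstar (hℓ : ℓ ≤ n) (u : Matrix (Fin n) (Fin n) ℝ)
    (hdet : (TL ℓ hℓ u).det ≠ 0) (i j : Fin n) (hi : (i : ℕ) < ℓ) (hj : ℓ ≤ (j : ℕ)) :
    (u * (1 + -(pstar ℓ hℓ u))) i j = 0 := by
  set p := pstar ℓ hℓ u with hp
  rw [Matrix.mul_add, Matrix.mul_one, Matrix.mul_neg, Matrix.add_apply, Matrix.neg_apply]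
  have hsum : (u * p) i j = u i j := by
    rw [Matrix.mul_apply]
    rw [sum_restrict hℓ _ (fun k hk => by
      rw [hp, pstar]; simp only [dif_neg (by omega : ¬((k:ℕ) < ℓ ∧ ℓ ≤ (j:ℕ)))]; ring)]
    have hterm : ∀ a : Fin ℓ, u i (Fin.castLE hℓ a) * p (Fin.castLE hℓ a) j
        = (TL ℓ hℓ u) ⟨i.1, hi⟩ a *
          (((TL ℓ hℓ u).det)⁻¹ *
            (((TL ℓ hℓ u).adjugate) * (TR ℓ hℓ u)) a ⟨j.1 - ℓ, by omega⟩) := by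
      intro a
      have hcond : ((Fin.castLE hℓ a : Fin n) : ℕ) < ℓ ∧ ℓ ≤ (j : ℕ) := ⟨a.2, hj⟩
      rw [hp]
      unfold pstar
      rw [dif_pos hcond]
      rfl
    rw [Finset.sum_congr rfl (fun a _ => hterm a)]
    have : ∑ a : Fin ℓ, (TL ℓ hℓ u) ⟨i.1, hi⟩ a *
        (((TL ℓ hℓ u).det)⁻¹ *
          (((TL ℓ hℓ u).adjugate) * (TR ℓ hℓ u)) a ⟨j.1 - ℓ, by omega⟩)
        = ((TL ℓ hℓ u).det)⁻¹ *
          ((TL ℓ hℓ u) * (((TL ℓ hℓ u).adjugate) * (TR ℓ hℓ u))) ⟨i.1, hi⟩ ⟨j.1 - ℓ, by omega⟩ := by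
      rw [Matrix.mul_apply, Finset.mul_sum]
      congr 1
      funext a
      ring
    rw [this, ← Matrix.mul_assoc, Matrix.mul_adjugate, Matrix.smul_mul, Matrix.one_mul,
      Matrix.smul_apply, smul_eq_mul, ← mul_assoc, inv_mul_cancel₀ hdet, one_mul]
    show TR ℓ hℓ u ⟨i.1, hi⟩ ⟨j.1 - ℓ, _⟩ = u i j
    unfold TR
    rw [Matrix.submatrix_apply]
    congr 1
    exact Fin.ext (by simp; omega)
  rw [hsum]
  ring

end Blocks

end Stmt9Aux

namespace Stmt9Aux

section Compactness

variable {n ℓ : ℕ}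

lemma isCompact_entriesBounded_det (n : ℕ) (m : ℝ) :
    IsCompact {w : Matrix (Fin n) (Fin n) ℝ | (∀ i j, |w i j| ≤ m) ∧ w.det = 1} := by
  have hK : IsCompact (Set.univ.pi fun _ : Fin n =>
      (Set.univ.pi fun _ : Fin n => Set.Icc (-m) m)) :=
    isCompact_univ_pi fun _ => isCompact_univ_pi fun _ => isCompact_Icc
  apply hK.of_isClosed_subset
  · have hset : {w : Matrix (Fin n) (Fin n) ℝ | (∀ i j, |w i j| ≤ m) ∧ w.det = 1}
        = (⋂ i, ⋂ j, {w : Matrix (Fin n) (Fin n) ℝ | |w i j| ≤ m})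
          ∩ {w : Matrix (Fin n) (Fin n) ℝ | w.det = 1} := by
      ext w; simp [Set.mem_iInter]
    rw [hset]
    apply IsClosed.inter
    · refine isClosed_iInter fun i => isClosed_iInter fun j => ?_
      have hc : Continuous fun w : Matrix (Fin n) (Fin n) ℝ => |w i j| :=
        ((continuous_apply j).comp (continuous_apply i)).abs
      exact isClosed_le hc continuous_const
    · exact isClosed_eq (continuous_id.matrix_det) continuous_const
  · rintro w ⟨hw, -⟩
    rw [Set.mem_pi]
    intro i _
    rw [Set.mem_pi]
    intro j _
    exact abs_le.1 (hw i j)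

lemma isCompact_entriesBounded_detTL (hℓ : ℓ ≤ n) (B q : ℝ) :
    IsCompact {u : Matrix (Fin n) (Fin n) ℝ |
      (∀ i j, |u i j| ≤ B) ∧ q ≤ ((TL ℓ hℓ u).det) ^ 2} := by
  have hK : IsCompact (Set.univ.pi fun _ : Fin n =>
      (Set.univ.pi fun _ : Fin n => Set.Icc (-B) B)) :=
    isCompact_univ_pi fun _ => isCompact_univ_pi fun _ => isCompact_Icc
  apply hK.of_isClosed_subset
  · have hset : {u : Matrix (Fin n) (Fin n) ℝ |
        (∀ i j, |u i j| ≤ B) ∧ q ≤ ((TL ℓ hℓ u).det) ^ 2}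
        = (⋂ i, ⋂ j, {w : Matrix (Fin n) (Fin n) ℝ | |w i j| ≤ B})
          ∩ {u : Matrix (Fin n) (Fin n) ℝ | q ≤ ((TL ℓ hℓ u).det) ^ 2} := by
      ext w; simp [Set.mem_iInter]
    rw [hset]
    apply IsClosed.inter
    · refine isClosed_iInter fun i => isClosed_iInter fun j => ?_
      have hc : Continuous fun w : Matrix (Fin n) (Fin n) ℝ => |w i j| :=
        ((continuous_apply j).comp (continuous_apply i)).abs
      exact isClosed_le hc continuous_const
    · refine isClosed_le continuous_const ?_
      exact ((continuous_id.matrix_submatrix _ _).matrix_det).pow 2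
  · rintro w ⟨hw, -⟩
    rw [Set.mem_pi]
    intro i _
    rw [Set.mem_pi]
    intro j _
    exact abs_le.1 (hw i j)

lemma TL_one (hℓ : ℓ ≤ n) : TL ℓ hℓ (1 : Matrix (Fin n) (Fin n) ℝ) = 1 := by
  ext a b
  unfold TL
  rw [Matrix.submatrix_apply, Matrix.one_apply, Matrix.one_apply]
  simp [(Fin.castLE_injective hℓ).eq_iff]

/-- Stage 1: a finite set of group elements making some top-left minor uniformly invertible. -/
lemma stage1 (hℓ : ℓ ≤ n) (m : ℝ) (hm : 1 ≤ m) :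
    ∃ (T : Finset (SL n)) (q : ℝ), 0 < q ∧ T.Nonempty ∧
      ∀ w : SL n, (∀ i j, |(w : Matrix (Fin n) (Fin n) ℝ) i j| ≤ m) →
        ∃ v ∈ T, q ≤ ((TL ℓ hℓ ((w : Matrix (Fin n) (Fin n) ℝ)
          * ((v⁻¹ : SL n) : Matrix (Fin n) (Fin n) ℝ))).det) ^ 2 := by
  classical
  set Ω : Set (Matrix (Fin n) (Fin n) ℝ) :=
    {w | (∀ i j, |w i j| ≤ m) ∧ w.det = 1} with hΩdef
  have hΩ : IsCompact Ω := isCompact_entriesBounded_det n m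
  set O : SL n → Set (Matrix (Fin n) (Fin n) ℝ) := fun v =>
    {w | ((TL ℓ hℓ (w * ((v⁻¹ : SL n) : Matrix (Fin n) (Fin n) ℝ))).det) ≠ 0} with hOdef
  have hOopen : ∀ v, IsOpen (O v) := by
    intro v
    have hc : Continuous fun w : Matrix (Fin n) (Fin n) ℝ =>
        (TL ℓ hℓ (w * ((v⁻¹ : SL n) : Matrix (Fin n) (Fin n) ℝ))).det :=
      ((continuous_id.matrix_mul continuous_const).matrix_submatrix _ _).matrix_det
    exact isOpen_ne.preimage hc
  have hcover : Ω ⊆ ⋃ v : SL n, O v := by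
    rintro w ⟨hw, hdet⟩
    refine Set.mem_iUnion.2 ⟨⟨w, hdet⟩, ?_⟩
    show (TL ℓ hℓ (w * _)).det ≠ 0
    have : w * (((⟨w, hdet⟩ : SL n)⁻¹ : SL n) : Matrix (Fin n) (Fin n) ℝ) = 1 := by
      have h2 := Matrix.SpecialLinearGroup.coe_mul (⟨w, hdet⟩ : SL n) (⟨w, hdet⟩ : SL n)⁻¹
      erw [mul_inv_cancel] at h2
      rw [← h2]
      rfl
    rw [this, TL_one]
    simp
  obtain ⟨t, ht⟩ := hΩ.elim_finite_subcover O hOopen hcover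
  have h1Ω : (1 : Matrix (Fin n) (Fin n) ℝ) ∈ Ω := by
    constructor
    · intro i j
      rw [Matrix.one_apply]
      split <;> simp <;> linarith
    · simp
  -- t is nonempty
  have htne : t.Nonempty := by
    rcases Set.mem_iUnion₂.1 (ht h1Ω) with ⟨v, hv, -⟩
    exact ⟨v, hv⟩
  -- F is positive continuous on Ω
  set F : Matrix (Fin n) (Fin n) ℝ → ℝ := fun w =>
    ∑ v ∈ t, ((TL ℓ hℓ (w * ((v⁻¹ : SL n) : Matrix (Fin n) (Fin n) ℝ))).det) ^ 2 with hFdef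
  have hFcont : Continuous F := by
    apply continuous_finset_sum
    intro v _
    exact (((continuous_id.matrix_mul continuous_const).matrix_submatrix _ _).matrix_det).pow 2
  have hFpos : ∀ w ∈ Ω, 0 < F w := by
    intro w hw
    rcases Set.mem_iUnion₂.1 (ht hw) with ⟨v, hvt, hvO⟩
    exact Finset.sum_pos' (fun v _ => sq_nonneg _)
      ⟨v, hvt, lt_of_le_of_ne (sq_nonneg _) (Ne.symm (pow_ne_zero 2 hvO))⟩
  obtain ⟨w₀, hw₀, hmin⟩ := hΩ.exists_isMinOn ⟨1, h1Ω⟩ hFcont.continuousOn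
  set q₁ := F w₀ with hq₁
  have hq₁pos : 0 < q₁ := hFpos w₀ hw₀
  refine ⟨t, q₁ / t.card, by positivity, htne, ?_⟩
  intro w hwb
  have hwΩ : (w : Matrix (Fin n) (Fin n) ℝ) ∈ Ω := ⟨hwb, w.2⟩
  have hFw : q₁ ≤ F w := hmin hwΩ
  by_contra hcon
  push_neg at hcon
  have hlt : F (w : Matrix (Fin n) (Fin n) ℝ) < ∑ _v ∈ t, q₁ / t.card := by
    rw [hFdef]
    apply Finset.sum_lt_sum_of_nonempty htne
    intro v hv
    exact hcon v hv
  rw [Finset.sum_const, nsmul_eq_mul] at hlt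
  rw [mul_div_cancel₀ _ (by exact_mod_cast htne.card_pos.ne')] at hlt
  exact absurd hFw (by linarith)

end Compactness

end Stmt9Aux

namespace Stmt9Aux

section Stage2Grid

variable {n ℓ : ℕ}

lemma stage2 (hℓ : ℓ ≤ n) (B q : ℝ) (hq : 0 < q) :
    ∃ C : ℝ, 0 < C ∧ ∀ u : Matrix (Fin n) (Fin n) ℝ,
      (∀ i j, |u i j| ≤ B) → q ≤ ((TL ℓ hℓ u).det) ^ 2 →
      ∀ i j, |pstar ℓ hℓ u i j| ≤ C := by
  classical
  set Ω : Set (Matrix (Fin n) (Fin n) ℝ) :=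
    {u | (∀ i j, |u i j| ≤ B) ∧ q ≤ ((TL ℓ hℓ u).det) ^ 2} with hΩdef
  have hΩ : IsCompact Ω := isCompact_entriesBounded_detTL hℓ B q
  have hdetne : ∀ u ∈ Ω, (TL ℓ hℓ u).det ≠ 0 := by
    rintro u ⟨-, hu⟩ h0
    rw [h0] at hu
    simp at hu
    nlinarith
  set f : Matrix (Fin n) (Fin n) ℝ → ℝ := fun u => ∑ i, ∑ j, |pstar ℓ hℓ u i j| with hfdef
  have hfcont : ContinuousOn f Ω := by
    apply continuousOn_finset_sum
    intro i _
    apply continuousOn_finset_sum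
    intro j _
    by_cases hij : (i : ℕ) < ℓ ∧ ℓ ≤ (j : ℕ)
    · have heq : ∀ u : Matrix (Fin n) (Fin n) ℝ, pstar ℓ hℓ u i j
          = ((TL ℓ hℓ u).det)⁻¹ *
            (((TL ℓ hℓ u).adjugate) * (TR ℓ hℓ u)) ⟨i.1, hij.1⟩ ⟨j.1 - ℓ, by omega⟩ := by
        intro u
        unfold pstar
        rw [dif_pos hij]
      simp only [heq]
      apply ContinuousOn.abs
      apply ContinuousOn.mul
      · apply ContinuousOn.inv₀
        · exact ((continuous_id.matrix_submatrix _ _).matrix_det).continuousOn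
        · exact hdetne
      · have hM : Continuous fun u : Matrix (Fin n) (Fin n) ℝ =>
            ((TL ℓ hℓ u).adjugate) * (TR ℓ hℓ u) :=
          ((continuous_id.matrix_submatrix _ _).matrix_adjugate).matrix_mul
            (continuous_id.matrix_submatrix _ _)
        exact (((continuous_apply _).comp ((continuous_apply _).comp hM))).continuousOn
    · have heq : ∀ u : Matrix (Fin n) (Fin n) ℝ, pstar ℓ hℓ u i j = 0 := by
        intro u
        unfold pstar
        rw [dif_neg hij]
      simp only [heq]
      simp
      exact continuousOn_const
  obtain ⟨C₀, hC₀⟩ := hΩ.exists_bound_of_continuousOn hfcont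
  refine ⟨max C₀ 1, lt_of_lt_of_le one_pos (le_max_right _ _), ?_⟩
  intro u hub hudet i j
  have huΩ : u ∈ Ω := ⟨hub, hudet⟩
  have h1 : |pstar ℓ hℓ u i j| ≤ f u := by
    rw [hfdef]
    calc |pstar ℓ hℓ u i j| ≤ ∑ j', |pstar ℓ hℓ u i j'| :=
          Finset.single_le_sum (f := fun j' => |pstar ℓ hℓ u i j'|)
            (fun _ _ => abs_nonneg _) (Finset.mem_univ j)
      _ ≤ ∑ i', ∑ j', |pstar ℓ hℓ u i' j'| :=
          Finset.single_le_sum (f := fun i' => ∑ j', |pstar ℓ hℓ u i' j'|)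
            (fun _ _ => Finset.sum_nonneg fun _ _ => abs_nonneg _) (Finset.mem_univ i)
  calc |pstar ℓ hℓ u i j| ≤ f u := h1
    _ ≤ ‖f u‖ := le_abs_self _
    _ ≤ C₀ := hC₀ u huΩ
    _ ≤ max C₀ 1 := le_max_left _ _

lemma grid (hℓn : ℓ < n) (C : ℝ) (hC : 0 < C) {δ : ℝ} (hδ : 0 < δ) (hδ1 : δ ≤ 1) :
    ∃ (ι : Type) (_ : Fintype ι) (P : ι → Matrix (Fin n) (Fin n) ℝ),
      (∀ z, UpSet ℓ (P z)) ∧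
      ((Fintype.card ι : ℝ) ≤ ((2 * C + 3) / δ) ^ (ℓ * (n - ℓ))) ∧
      ∀ p : Matrix (Fin n) (Fin n) ℝ, UpSet ℓ p → (∀ i j, |p i j| ≤ C) →
        ∃ z, ∀ i j, |p i j - P z i j| ≤ δ := by
  classical
  set K : ℤ := ⌈C / δ⌉ with hK
  have hKpos : 0 ≤ K := Int.ceil_nonneg (by positivity)
  have hKle : (K : ℝ) < C / δ + 1 := Int.ceil_lt_add_one _
  have hCK : C / δ ≤ (K : ℝ) := Int.le_ceil _
  refine ⟨(Fin ℓ × Fin (n - ℓ)) → {z : ℤ // z ∈ Finset.Icc (-K) K}, inferInstance,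
    fun z => fun i j =>
      if h : (i : ℕ) < ℓ ∧ ℓ ≤ (j : ℕ) then
        δ * ((z (⟨i.1, h.1⟩, ⟨j.1 - ℓ, by omega⟩) : ℤ) : ℝ)
      else 0, ?_, ?_, ?_⟩
  · intro z i j hij
    simp only [dif_neg hij]
  · rw [Fintype.card_fun]
    have hcard1 : Fintype.card {z : ℤ // z ∈ Finset.Icc (-K) K} = (2 * K + 1).toNat := by
      rw [Fintype.card_coe, Int.card_Icc]
      congr 1
      ring
    rw [hcard1, Fintype.card_prod, Fintype.card_fin, Fintype.card_fin]
    have hb : ((2 * K + 1).toNat : ℝ) ≤ (2 * C + 3) / δ := by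
      have h1 : (((2 * K + 1).toNat : ℤ) : ℝ) = 2 * (K : ℝ) + 1 := by
        rw [Int.toNat_of_nonneg (by omega)]
        push_cast
        ring
      have h2 : ((2 * K + 1).toNat : ℝ) = 2 * (K : ℝ) + 1 := by exact_mod_cast h1
      rw [h2]
      have h3 : 3 ≤ 3 / δ := by
        rw [le_div_iff₀ hδ]
        linarith
      have h4 : 2 * (K : ℝ) + 1 ≤ 2 * (C / δ) + 3 := by linarith
      have h5 : 2 * (C / δ) + 3 ≤ (2 * C + 3) / δ := by
        rw [add_div]
        rw [mul_div_assoc]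
        linarith
      linarith
    calc (((2 * K + 1).toNat ^ (ℓ * (n - ℓ)) : ℕ) : ℝ)
        = (((2 * K + 1).toNat : ℝ)) ^ (ℓ * (n - ℓ)) := by push_cast; ring
      _ ≤ ((2 * C + 3) / δ) ^ (ℓ * (n - ℓ)) :=
          pow_le_pow_left₀ (by positivity) hb _
  · intro p hup hbp
    have hmem : ∀ (a : Fin ℓ) (b : Fin (n - ℓ)),
        ⌊p (Fin.castLE hℓn.le a) ⟨ℓ + b.1, by omega⟩ / δ⌋ ∈ Finset.Icc (-K) K := by
      intro a b
      set x : ℝ := p (Fin.castLE hℓn.le a) ⟨ℓ + b.1, by omega⟩ with hx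
      have hxb : |x| ≤ C := hbp _ _
      rw [Finset.mem_Icc]
      constructor
      · rw [Int.le_floor]
        push_cast
        rw [le_div_iff₀ hδ]
        have : -(C / δ) * δ = -C := by field_simp
        nlinarith [abs_le.1 hxb, hCK]
      · calc ⌊x / δ⌋ ≤ ⌈x / δ⌉ := Int.floor_le_ceil _
          _ ≤ K := by
            rw [hK]
            apply Int.ceil_le_ceil
            rw [div_le_div_iff_of_pos_right hδ]
            exact (abs_le.1 hxb).2
    refine ⟨fun ab => ⟨⌊p (Fin.castLE hℓn.le ab.1) ⟨ℓ + ab.2.1, by omega⟩ / δ⌋,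
      hmem ab.1 ab.2⟩, ?_⟩
    intro i j
    by_cases hij : (i : ℕ) < ℓ ∧ ℓ ≤ (j : ℕ)
    · beta_reduce
      rw [dif_pos hij]
      have hjeq : (⟨ℓ + (j.1 - ℓ), by omega⟩ : Fin n) = j := Fin.ext (by simp; omega)
      have hieq : (Fin.castLE hℓn.le ⟨i.1, hij.1⟩ : Fin n) = i := rfl
      simp only []
      rw [hjeq, hieq]
      set x : ℝ := p i j
      have h1 : ((⌊x / δ⌋ : ℤ) : ℝ) ≤ x / δ := Int.floor_le _
      have h2 : x / δ < ((⌊x / δ⌋ : ℤ) : ℝ) + 1 := Int.lt_floor_add_one _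
      have hxx : x / δ * δ = x := div_mul_cancel₀ x hδ.ne'
      have ha : δ * ((⌊x / δ⌋ : ℤ) : ℝ) ≤ x := by nlinarith
      have hb : x ≤ δ * ((⌊x / δ⌋ : ℤ) : ℝ) + δ := by nlinarith
      rw [abs_le]
      constructor <;> linarith
    · beta_reduce
      rw [dif_neg hij, hup i j hij]
      simp [hδ.le]

end Stage2Grid

end Stmt9Aux

namespace Stmt9Aux

lemma UpSet.sub {n ℓ : ℕ} {p q : Matrix (Fin n) (Fin n) ℝ} (hp : UpSet ℓ p) (hq : UpSet ℓ q) :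
    UpSet ℓ (p - q) := fun i j hij => by
  rw [Matrix.sub_apply, hp i j hij, hq i j hij, sub_zero]

set_option maxHeartbeats 4000000 in
/-- The main covering construction. -/
lemma main_cov (n ℓ : ℕ) (hℓ1 : 1 ≤ ℓ) (hℓn : ℓ < n) (m : ℝ) (hm : 1 ≤ m) :
    ∃ D : ℝ, 1 ≤ D ∧ ∀ t : ℝ, 0 < t → t ≤ 1 →
      ∃ (ι : Type) (_ : Fintype ι) (g : ι → SL n),
        ((Fintype.card ι : ℝ) ≤ D * (1 / t ^ n) ^ (ℓ * (n - ℓ))) ∧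
        ∀ w : SL n, (∀ i j, |(w : Matrix (Fin n) (Fin n) ℝ) i j| ≤ m) →
          ∃ z : ι, ∀ a : Fin ℓ,
            ‖rowv (((w * g z) : SL n) : Matrix (Fin n) (Fin n) ℝ) (Fin.castLE hℓn.le a)‖
              ≤ D * t ^ (n - ℓ) := by
  classical
  have hn1 : 1 ≤ n := hℓn.le.trans' hℓ1
  obtain ⟨T, q, hq, hTne, hstage1⟩ := stage1 (n := n) (ℓ := ℓ) hℓn.le m hm
  -- uniform bound on the entries of v⁻¹, v ∈ T
  set MT : ℝ := 1 + ∑ v ∈ T, ∑ i, ∑ j,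
    |((v⁻¹ : SL n) : Matrix (Fin n) (Fin n) ℝ) i j| with hMTdef
  have hMT1 : 1 ≤ MT := by
    have h0 : (0:ℝ) ≤ ∑ v ∈ T, ∑ i, ∑ j, |((v⁻¹ : SL n) : Matrix (Fin n) (Fin n) ℝ) i j| :=
      Finset.sum_nonneg fun _ _ => Finset.sum_nonneg fun _ _ =>
        Finset.sum_nonneg fun _ _ => abs_nonneg _
    rw [hMTdef]
    linarith
  have hMT : ∀ v ∈ T, ∀ i j, |((v⁻¹ : SL n) : Matrix (Fin n) (Fin n) ℝ) i j| ≤ MT := by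
    intro v hv i j
    have h1 : |((v⁻¹ : SL n) : Matrix (Fin n) (Fin n) ℝ) i j|
        ≤ ∑ j', |((v⁻¹ : SL n) : Matrix (Fin n) (Fin n) ℝ) i j'| :=
      Finset.single_le_sum (f := fun j' => |((v⁻¹ : SL n) : Matrix (Fin n) (Fin n) ℝ) i j'|)
        (fun _ _ => abs_nonneg _) (Finset.mem_univ _)
    have h2 : ∑ j', |((v⁻¹ : SL n) : Matrix (Fin n) (Fin n) ℝ) i j'|
        ≤ ∑ i', ∑ j', |((v⁻¹ : SL n) : Matrix (Fin n) (Fin n) ℝ) i' j'| :=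
      Finset.single_le_sum
        (f := fun i' => ∑ j', |((v⁻¹ : SL n) : Matrix (Fin n) (Fin n) ℝ) i' j'|)
        (fun _ _ => Finset.sum_nonneg fun _ _ => abs_nonneg _) (Finset.mem_univ _)
    have h3 : ∑ i', ∑ j', |((v⁻¹ : SL n) : Matrix (Fin n) (Fin n) ℝ) i' j'|
        ≤ ∑ v' ∈ T, ∑ i', ∑ j', |((v'⁻¹ : SL n) : Matrix (Fin n) (Fin n) ℝ) i' j'| :=
      Finset.single_le_sum
        (f := fun v' => ∑ i', ∑ j', |((v'⁻¹ : SL n) : Matrix (Fin n) (Fin n) ℝ) i' j'|)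
        (fun _ _ => Finset.sum_nonneg fun _ _ => Finset.sum_nonneg fun _ _ => abs_nonneg _) hv
    linarith
  set B₁ : ℝ := n * m * MT with hB₁def
  have hn0 : (0:ℝ) < n := by exact_mod_cast hn1
  have hB₁pos : 0 < B₁ := by
    rw [hB₁def]
    exact mul_pos (mul_pos hn0 (lt_of_lt_of_le one_pos hm)) (lt_of_lt_of_le one_pos hMT1)
  obtain ⟨C₁, hC₁, hstage2⟩ := stage2 (n := n) (ℓ := ℓ) hℓn.le B₁ q hq
  set B₂ : ℝ := B₁ + n * B₁ * C₁ with hB₂def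
  have hprod : (0:ℝ) < n * B₁ * C₁ := mul_pos (mul_pos hn0 hB₁pos) hC₁
  have hB₂pos : 0 < B₂ := by
    rw [hB₂def]
    linarith
  have hB₁B₂ : B₁ ≤ B₂ := by
    rw [hB₂def]
    linarith
  set B₃ : ℝ := B₂ + n * B₂ with hB₃def
  have hB₃pos : 0 < B₃ := by positivity
  set D : ℝ := 1 + max (Real.sqrt n * B₃) ((T.card : ℝ) * (2 * C₁ + 3) ^ (ℓ * (n - ℓ))) with hDdef
  have hD1 : 1 ≤ D := by
    have h1 : 0 ≤ Real.sqrt n * B₃ := by positivity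
    have := le_max_left (Real.sqrt n * B₃) ((T.card : ℝ) * (2 * C₁ + 3) ^ (ℓ * (n - ℓ)))
    simp only [hDdef]
    linarith
  refine ⟨D, hD1, ?_⟩
  intro t ht ht1
  set δ : ℝ := t ^ n with hδdef
  have hδpos : 0 < δ := by positivity
  have hδ1 : δ ≤ 1 := pow_le_one₀ ht.le ht1
  obtain ⟨ι₀, hι₀, P, hUp, hcard, happrox⟩ := grid (n := n) hℓn C₁ hC₁ hδpos hδ1
  set gfun : ↥T × ι₀ → SL n := fun vz =>
    ((vz.1 : SL n))⁻¹ * npSL ((hUp vz.2).neg) * atSL hℓn.le ht.ne' with hgfun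
  refine ⟨↥T × ι₀, @instFintypeProd ↥T ι₀ (FinsetCoe.fintype T) hι₀, gfun, ?_, ?_⟩
  · -- cardinality bound
    rw [@Fintype.card_prod ↥T ι₀ (FinsetCoe.fintype T) hι₀, Fintype.card_coe]
    push_cast
    calc (T.card : ℝ) * (Fintype.card ι₀ : ℝ)
        ≤ (T.card : ℝ) * (((2 * C₁ + 3) / δ) ^ (ℓ * (n - ℓ))) :=
          mul_le_mul_of_nonneg_left hcard (by positivity)
      _ = ((T.card : ℝ) * (2 * C₁ + 3) ^ (ℓ * (n - ℓ))) * (1 / δ) ^ (ℓ * (n - ℓ)) := by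
          rw [div_pow, one_div, inv_pow]
          ring
      _ ≤ D * (1 / t ^ n) ^ (ℓ * (n - ℓ)) := by
          apply mul_le_mul_of_nonneg_right _ (by positivity)
          have := le_max_right (Real.sqrt n * B₃) ((T.card : ℝ) * (2 * C₁ + 3) ^ (ℓ * (n - ℓ)))
          simp only [hDdef]
          linarith
  · -- the covering property
    intro w hw
    obtain ⟨v, hvT, hvdet⟩ := hstage1 w hw
    set u : Matrix (Fin n) (Fin n) ℝ :=
      (w : Matrix (Fin n) (Fin n) ℝ) * ((v⁻¹ : SL n) : Matrix (Fin n) (Fin n) ℝ) with hudef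
    have hub : ∀ i j, |u i j| ≤ B₁ := by
      intro i j
      rw [hudef, Matrix.mul_apply]
      calc |∑ k, (w : Matrix (Fin n) (Fin n) ℝ) i k
            * ((v⁻¹ : SL n) : Matrix (Fin n) (Fin n) ℝ) k j|
          ≤ ∑ k, |(w : Matrix (Fin n) (Fin n) ℝ) i k
            * ((v⁻¹ : SL n) : Matrix (Fin n) (Fin n) ℝ) k j| :=
            Finset.abs_sum_le_sum_abs _ _
        _ ≤ ∑ _k : Fin n, m * MT := by
            apply Finset.sum_le_sum
            intro k _
            rw [abs_mul]
            apply mul_le_mul (hw i k) (hMT v hvT k j) (abs_nonneg _) (by linarith)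
        _ = n * (m * MT) := by rw [Finset.sum_const]; simp [nsmul_eq_mul]
        _ = B₁ := by rw [hB₁def]; ring
    have hdetTL : q ≤ ((TL ℓ hℓn.le u).det) ^ 2 := hvdet
    have hdetne : (TL ℓ hℓn.le u).det ≠ 0 := by
      intro h0
      rw [h0] at hdetTL
      simp at hdetTL
      nlinarith
    set p : Matrix (Fin n) (Fin n) ℝ := pstar ℓ hℓn.le u with hpdef
    have hpUp : UpSet ℓ p := UpSet_pstar hℓn.le u
    have hpb : ∀ i j, |p i j| ≤ C₁ := hstage2 u hub hdetTL
    obtain ⟨z, hz⟩ := happrox p hpUp hpb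
    refine ⟨(⟨v, hvT⟩, z), ?_⟩
    set pz : Matrix (Fin n) (Fin n) ℝ := P z with hpzdef
    have hpzUp : UpSet ℓ pz := hUp z
    -- the matrix identity
    have hsplit : (1 : Matrix (Fin n) (Fin n) ℝ) + -pz
        = ((1 : Matrix (Fin n) (Fin n) ℝ) + -p) * (1 + (p - pz)) := by
      rw [hpUp.neg.one_add_mul (hpUp.sub hpzUp)]
      congr 1
      abel
    set u' : Matrix (Fin n) (Fin n) ℝ := u * (1 + -p) with hu'def
    have hu'masked : ∀ i j : Fin n, (i : ℕ) < ℓ → ℓ ≤ (j : ℕ) → u' i j = 0 := by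
      intro i j hi hj
      exact mul_one_sub_pstar hℓn.le u hdetne i j hi hj
    have hu'b : ∀ i j, |u' i j| ≤ B₂ := by
      intro i j
      rw [hu'def, Matrix.mul_add, Matrix.mul_one, Matrix.add_apply, Matrix.mul_neg,
        Matrix.neg_apply]
      have h2 : |(u * p) i j| ≤ n * B₁ * C₁ := by
        rw [Matrix.mul_apply]
        calc |∑ k, u i k * p k j| ≤ ∑ k, |u i k * p k j| := Finset.abs_sum_le_sum_abs _ _
          _ ≤ ∑ _k : Fin n, B₁ * C₁ := by
              apply Finset.sum_le_sum
              intro k _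
              rw [abs_mul]
              exact mul_le_mul (hub i k) (hpb k j) (abs_nonneg _) hB₁pos.le
          _ = n * B₁ * C₁ := by rw [Finset.sum_const]; simp [nsmul_eq_mul]; ring
      calc |u i j + -(u * p) i j| ≤ |u i j| + |-(u * p) i j| := abs_add_le _ _
        _ = |u i j| + |(u * p) i j| := by rw [abs_neg]
        _ ≤ B₁ + n * B₁ * C₁ := add_le_add (hub i j) h2
        _ = B₂ := hB₂def.symm
    set u'' : Matrix (Fin n) (Fin n) ℝ := u * (1 + -pz) with hu''def
    have hu''eq : u'' = u' * (1 + (p - pz)) := by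
      rw [hu''def, hsplit, hu'def, hudef]
      simp only [Matrix.mul_assoc]
    have hEb : ∀ i j, |(p - pz) i j| ≤ δ := by
      intro i j
      rw [Matrix.sub_apply]
      exact hz i j
    have hu''masked : ∀ i j : Fin n, (i : ℕ) < ℓ → ℓ ≤ (j : ℕ) →
        |u'' i j| ≤ n * B₂ * δ := by
      intro i j hi hj
      rw [hu''eq, Matrix.mul_add, Matrix.mul_one, Matrix.add_apply, hu'masked i j hi hj,
        zero_add, Matrix.mul_apply]
      calc |∑ k, u' i k * (p - pz) k j| ≤ ∑ k, |u' i k * (p - pz) k j| :=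
            Finset.abs_sum_le_sum_abs _ _
        _ ≤ ∑ _k : Fin n, B₂ * δ := by
            apply Finset.sum_le_sum
            intro k _
            rw [abs_mul]
            exact mul_le_mul (hu'b i k) (hEb k j) (abs_nonneg _) hB₂pos.le
        _ = n * B₂ * δ := by rw [Finset.sum_const]; simp [nsmul_eq_mul]; ring
    have hu''b : ∀ i j, |u'' i j| ≤ B₃ := by
      intro i j
      rw [hu''eq, Matrix.mul_add, Matrix.mul_one, Matrix.add_apply]
      have h2 : |(u' * (p - pz)) i j| ≤ n * B₂ * δ := by
        rw [Matrix.mul_apply]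
        calc |∑ k, u' i k * (p - pz) k j| ≤ ∑ k, |u' i k * (p - pz) k j| :=
              Finset.abs_sum_le_sum_abs _ _
          _ ≤ ∑ _k : Fin n, B₂ * δ := by
              apply Finset.sum_le_sum
              intro k _
              rw [abs_mul]
              exact mul_le_mul (hu'b i k) (hEb k j) (abs_nonneg _) hB₂pos.le
          _ = n * B₂ * δ := by rw [Finset.sum_const]; simp [nsmul_eq_mul]; ring
      calc |u' i j + (u' * (p - pz)) i j| ≤ |u' i j| + |(u' * (p - pz)) i j| := abs_add_le _ _
        _ ≤ B₂ + n * B₂ * δ := add_le_add (hu'b i j) h2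
        _ ≤ B₂ + n * B₂ * 1 := by
            have : (0:ℝ) ≤ n * B₂ := by positivity
            nlinarith
        _ = B₃ := by rw [hB₃def]; ring
    -- the final matrix
    have hδpow : δ * (t ^ ℓ)⁻¹ = t ^ (n - ℓ) := by
      rw [hδdef]
      have h1 : t ^ n = t ^ (n - ℓ) * t ^ ℓ := by
        rw [← pow_add]
        congr 1
        omega
      rw [h1, mul_assoc, mul_inv_cancel₀ (pow_ne_zero _ ht.ne'), mul_one]
    have hgz : gfun (⟨v, hvT⟩, z) = v⁻¹ * npSL ((hUp z).neg) * atSL hℓn.le ht.ne' := rfl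
    have hnpz : (npSL ((hUp z).neg) : Matrix (Fin n) (Fin n) ℝ) = 1 + -pz := by
      rw [npSL_coe, hpzdef]
    have hcoe : ((w * gfun (⟨v, hvT⟩, z) : SL n) : Matrix (Fin n) (Fin n) ℝ)
        = u'' * Matrix.diagonal (dvec n ℓ t) := by
      rw [hgz, Matrix.SpecialLinearGroup.coe_mul, Matrix.SpecialLinearGroup.coe_mul,
        Matrix.SpecialLinearGroup.coe_mul, hnpz, atSL_coe, hu''def, hudef]
      simp only [Matrix.mul_assoc]
    intro a
    rw [hcoe]
    have hrowb : ∀ j : Fin n, |(u'' * Matrix.diagonal (dvec n ℓ t)) (Fin.castLE hℓn.le a) j|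
        ≤ B₃ * t ^ (n - ℓ) := by
      intro j
      rw [Matrix.mul_diagonal]
      have hia : ((Fin.castLE hℓn.le a : Fin n) : ℕ) < ℓ := a.2
      by_cases hj : (j : ℕ) < ℓ
      · rw [abs_mul]
        have hd : |dvec n ℓ t j| = t ^ (n - ℓ) := by
          unfold dvec
          rw [if_pos hj, abs_of_pos (by positivity)]
        rw [hd]
        exact mul_le_mul_of_nonneg_right (hu''b _ j) (by positivity)
      · rw [abs_mul]
        have hd : |dvec n ℓ t j| = (t ^ ℓ)⁻¹ := by
          unfold dvec
          rw [if_neg hj, abs_of_pos (by positivity)]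
        rw [hd]
        calc |u'' (Fin.castLE hℓn.le a) j| * (t ^ ℓ)⁻¹
            ≤ (n * B₂ * δ) * (t ^ ℓ)⁻¹ := by
              apply mul_le_mul_of_nonneg_right
                (hu''masked _ j hia (by omega)) (by positivity)
          _ = (n * B₂) * (δ * (t ^ ℓ)⁻¹) := by ring
          _ = (n * B₂) * t ^ (n - ℓ) := by rw [hδpow]
          _ ≤ B₃ * t ^ (n - ℓ) := by
              apply mul_le_mul_of_nonneg_right _ (by positivity)
              rw [hB₃def]
              nlinarith
    calc ‖rowv (u'' * Matrix.diagonal (dvec n ℓ t)) (Fin.castLE hℓn.le a)‖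
        ≤ Real.sqrt n * (B₃ * t ^ (n - ℓ)) := norm_rowv_le (by positivity) hrowb
      _ = (Real.sqrt n * B₃) * t ^ (n - ℓ) := by ring
      _ ≤ D * t ^ (n - ℓ) := by
          apply mul_le_mul_of_nonneg_right _ (by positivity)
          have := le_max_left (Real.sqrt n * B₃) ((T.card : ℝ) * (2 * C₁ + 3) ^ (ℓ * (n - ℓ)))
          simp only [hDdef]
          linarith

end Stmt9Aux

namespace Stmt9Aux

/-- `Fin`-indexed version of the main covering construction. -/
lemma main_cov' (n ℓ : ℕ) (hℓ1 : 1 ≤ ℓ) (hℓn : ℓ < n) (m : ℝ) (hm : 1 ≤ m) :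
    ∃ D : ℝ, 1 ≤ D ∧ ∀ t : ℝ, 0 < t → t ≤ 1 →
      ∃ (N : ℕ) (g : Fin N → SL n),
        ((N : ℝ) ≤ D * (1 / t ^ n) ^ (ℓ * (n - ℓ))) ∧
        ∀ w : SL n, (∀ i j, |(w : Matrix (Fin n) (Fin n) ℝ) i j| ≤ m) →
          ∃ z : Fin N, ∀ a : Fin ℓ,
            ‖rowv (((w * g z) : SL n) : Matrix (Fin n) (Fin n) ℝ) (Fin.castLE hℓn.le a)‖
              ≤ D * t ^ (n - ℓ) := by
  obtain ⟨D, hD1, h⟩ := main_cov n ℓ hℓ1 hℓn m hm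
  refine ⟨D, hD1, fun t ht ht1 => ?_⟩
  obtain ⟨ι, hι, g, hcard, hcover⟩ := h t ht ht1
  refine ⟨@Fintype.card ι hι, fun k => g ((@Fintype.equivFin ι hι).symm k), hcard, ?_⟩
  intro w hw
  obtain ⟨z, hz⟩ := hcover w hw
  refine ⟨(@Fintype.equivFin ι hι) z, ?_⟩
  intro a
  simpa [Equiv.symm_apply_apply] using hz a

/-- the exhaustion of `X` by images of balls. -/
lemma exists_Vm_large {n : ℕ} (μ : Measure (XSpace n)) [IsProbabilityMeasure μ] :
    ∃ m : ℕ, (1/2 : ℝ≥0∞) <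
      μ (pr n '' {w : SL n | ∀ i j, |(w : Matrix (Fin n) (Fin n) ℝ) i j| < (m : ℝ)}) := by
  set V : ℕ → Set (XSpace n) := fun m =>
    pr n '' {w : SL n | ∀ i j, |(w : Matrix (Fin n) (Fin n) ℝ) i j| < (m : ℝ)} with hV
  have hmono : Monotone V := by
    intro m₁ m₂ hm
    apply Set.image_mono
    intro w hw i j
    calc |(w : Matrix (Fin n) (Fin n) ℝ) i j| < (m₁ : ℝ) := hw i j
      _ ≤ (m₂ : ℝ) := by exact_mod_cast hm
  have hunion : (⋃ m, V m) = Set.univ := by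
    rw [Set.eq_univ_iff_forall]
    intro x
    rw [Set.mem_iUnion]
    set w : SL n := Quotient.out x with hw
    set b : ℝ := ∑ i, ∑ j, |(w : Matrix (Fin n) (Fin n) ℝ) i j| with hb
    obtain ⟨m, hmb⟩ := exists_nat_gt b
    refine ⟨m, w, ?_, pr_out x⟩
    intro i j
    have h1 : |(w : Matrix (Fin n) (Fin n) ℝ) i j|
        ≤ ∑ j', |(w : Matrix (Fin n) (Fin n) ℝ) i j'| :=
      Finset.single_le_sum (f := fun j' => |(w : Matrix (Fin n) (Fin n) ℝ) i j'|)
        (fun _ _ => abs_nonneg _) (Finset.mem_univ _)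
    have h2 : ∑ j', |(w : Matrix (Fin n) (Fin n) ℝ) i j'| ≤ b := by
      rw [hb]
      exact Finset.single_le_sum
        (f := fun i' => ∑ j', |(w : Matrix (Fin n) (Fin n) ℝ) i' j'|)
        (fun _ _ => Finset.sum_nonneg fun _ _ => abs_nonneg _) (Finset.mem_univ _)
    calc |(w : Matrix (Fin n) (Fin n) ℝ) i j| ≤ b := le_trans h1 h2
      _ < m := hmb
  have hsup : (⨆ m, μ (V m)) = 1 := by
    rw [← hmono.directed_le.measure_iUnion, hunion, measure_univ]
  have hhalf : (1/2 : ℝ≥0∞) < ⨆ m, μ (V m) := by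
    rw [hsup]
    norm_num
  rw [lt_iSup_iff] at hhalf
  exact hhalf

end Stmt9Aux

theorem stmt9' (n : ℕ) (hn : 3 ≤ n)
    (μ : Measure (XSpace n)) [IsProbabilityMeasure μ]
    (hinv : ∀ (g : Matrix.SpecialLinearGroup (Fin n) ℝ) (s : Set (XSpace n)),
      MeasurableSet s → μ ((fun x => xmul x g) ⁻¹' s) = μ s)
    (ℓ : ℕ) (hℓ1 : 1 ≤ ℓ) (hℓ2 : ℓ ≤ n - 1) :
    ∃ ε₀ : ℝ, 0 < ε₀ ∧ ∃ c : ℝ, 0 < c ∧ ∀ ε : ℝ, 0 < ε → ε < ε₀ →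
      ENNReal.ofReal (c * ε ^ (n * ℓ)) ≤ μ {x : XSpace n | beta ℓ x ≤ ε} ∧
      ENNReal.ofReal (c * ε ^ n) ≤
        μ {x : XSpace n | (∏ j ∈ Finset.Icc 1 ℓ, beta j x) ≤ ε} := by
  classical
  have hℓn : ℓ < n := by omega
  obtain ⟨m₀, hm₀⟩ := Stmt9Aux.exists_Vm_large (n := n) μ
  set K : Set (XSpace n) := Stmt9Aux.pr n ''
    {w : Stmt9Aux.SL n | ∀ i j, |(w : Matrix (Fin n) (Fin n) ℝ) i j| < (m₀ : ℝ)} with hKdef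
  set m : ℝ := max (m₀ : ℝ) 1 with hmdef
  obtain ⟨D, hD1, hcov⟩ := Stmt9Aux.main_cov' n ℓ hℓ1 hℓn m (le_max_right _ _)
  have hDpos : (0:ℝ) < D := lt_of_lt_of_le one_pos hD1
  set c : ℝ := (2 * D ^ (n * ℓ + 1))⁻¹ with hcdef
  have hcpos : 0 < c := by
    rw [hcdef]
    exact inv_pos.2 (mul_pos two_pos (pow_pos hDpos _))
  have key : ∀ ε : ℝ, 0 < ε → ε < D →
      ENNReal.ofReal (c * ε ^ (n * ℓ)) ≤ μ {x : XSpace n | beta ℓ x ≤ ε} := by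
    intro ε hε hεD
    set t : ℝ := (ε / D) ^ ((1 : ℝ) / ((n - ℓ : ℕ) : ℝ)) with htdef
    have hεD1 : ε / D < 1 := (div_lt_one hDpos).2 hεD
    have hεD0 : 0 < ε / D := div_pos hε hDpos
    have ht : 0 < t := Real.rpow_pos_of_pos hεD0 _
    have ht1 : t ≤ 1 := Real.rpow_le_one hεD0.le hεD1.le (by positivity)
    have hnl0 : ((n - ℓ : ℕ) : ℝ) ≠ 0 := by
      have h : 0 < n - ℓ := by omega
      exact_mod_cast h.ne'
    have htpow : t ^ (n - ℓ) = ε / D := by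
      rw [htdef, ← Real.rpow_natCast ((ε / D) ^ ((1 : ℝ) / ((n - ℓ : ℕ) : ℝ))) (n - ℓ),
        ← Real.rpow_mul hεD0.le, one_div, inv_mul_cancel₀ hnl0, Real.rpow_one]
    have hεeq : D * t ^ (n - ℓ) = ε := by
      rw [htpow]
      field_simp
    obtain ⟨N, g, hNb, hcover⟩ := hcov t ht ht1
    set S : Set (XSpace n) := {x : XSpace n | beta ℓ x ≤ ε} with hSdef
    set s : Set (XSpace n) := toMeasurable μ S with hsdef
    have hsub : K ⊆ ⋃ z : Fin N, (fun x => xmul x (g z)) ⁻¹' s := by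
      rintro x ⟨w, hw, rfl⟩
      have hwb : ∀ i j, |(w : Matrix (Fin n) (Fin n) ℝ) i j| ≤ m := fun i j =>
        le_trans (hw i j).le (le_max_left _ _)
      obtain ⟨z, hz⟩ := hcover w hwb
      rw [Set.mem_iUnion]
      refine ⟨z, ?_⟩
      show xmul (Stmt9Aux.pr n w) (g z) ∈ s
      rw [Stmt9Aux.xmul_pr]
      apply subset_toMeasurable
      show beta ℓ (Stmt9Aux.pr n (w * g z)) ≤ ε
      apply Stmt9Aux.beta_le_of_rows (Fin.castLE hℓn.le) (Fin.castLE_injective _) hε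
      intro a
      exact le_trans (hz a) (le_of_eq hεeq)
    have hmeas_chain : (1/2 : ℝ≥0∞) ≤ (N : ℝ≥0∞) * μ S := by
      calc (1/2 : ℝ≥0∞) ≤ μ K := hm₀.le
        _ ≤ μ (⋃ z : Fin N, (fun x => xmul x (g z)) ⁻¹' s) := measure_mono hsub
        _ ≤ ∑' z : Fin N, μ ((fun x => xmul x (g z)) ⁻¹' s) := measure_iUnion_le _
        _ = ∑ z : Fin N, μ ((fun x => xmul x (g z)) ⁻¹' s) := tsum_fintype _
        _ = ∑ _z : Fin N, μ S := by
            apply Finset.sum_congr rfl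
            intro z _
            rw [hinv (g z) s (hsdef ▸ measurableSet_toMeasurable μ S), hsdef,
              measure_toMeasurable]
        _ = (N : ℝ≥0∞) * μ S := by
            rw [Finset.sum_const, Finset.card_univ, Fintype.card_fin, nsmul_eq_mul]
    have hN0 : N ≠ 0 := by
      rintro rfl
      rw [Nat.cast_zero, zero_mul] at hmeas_chain
      exact absurd hmeas_chain (by norm_num)
    have hq : c * ε ^ (n * ℓ) * (2 * N) ≤ 1 := by
      have hid : (t ^ (n - ℓ)) ^ (n * ℓ) * (1 / t ^ n) ^ (ℓ * (n - ℓ)) = 1 := by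
        rw [one_div, inv_pow, ← pow_mul, ← pow_mul,
          show (n - ℓ) * (n * ℓ) = n * (ℓ * (n - ℓ)) by ring]
        exact mul_inv_cancel₀ (pow_ne_zero _ ht.ne')
      have e1 : c * ε ^ (n * ℓ) * (2 * N)
          ≤ c * ε ^ (n * ℓ) * (2 * (D * (1 / t ^ n) ^ (ℓ * (n - ℓ)))) := by
        apply mul_le_mul_of_nonneg_left (by linarith)
          (mul_nonneg hcpos.le (pow_nonneg hε.le _))
      have e2 : c * ε ^ (n * ℓ) * (2 * (D * (1 / t ^ n) ^ (ℓ * (n - ℓ)))) = 1 := by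
        rw [← hεeq, mul_pow, hcdef]
        have hgather : (2 * D ^ (n * ℓ + 1))⁻¹ * (D ^ (n * ℓ) * (t ^ (n - ℓ)) ^ (n * ℓ)) *
            (2 * (D * (1 / t ^ n) ^ (ℓ * (n - ℓ))))
            = ((2 * D ^ (n * ℓ + 1))⁻¹ * (2 * D ^ (n * ℓ + 1))) *
              ((t ^ (n - ℓ)) ^ (n * ℓ) * (1 / t ^ n) ^ (ℓ * (n - ℓ))) := by
          ring
        rw [hgather, inv_mul_cancel₀ (ne_of_gt (mul_pos two_pos (pow_pos hDpos _))), hid,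
          mul_one]
      exact e1.trans_eq e2
    set b : ℝ≥0∞ := 2 * (N : ℝ≥0∞) with hbdef
    have hb0 : b ≠ 0 := by
      rw [hbdef]
      exact mul_ne_zero (by norm_num) (Nat.cast_ne_zero.2 hN0)
    have hbtop : b ≠ ⊤ := by
      rw [hbdef]
      exact ENNReal.mul_ne_top (by norm_num) (ENNReal.natCast_ne_top N)
    have h3 : 1 ≤ b * μ S := by
      calc (1 : ℝ≥0∞) = 2 * (1/2) := by
            rw [one_div, ENNReal.mul_inv_cancel (by norm_num) (by norm_num)]
        _ ≤ 2 * ((N : ℝ≥0∞) * μ S) := mul_le_mul_right hmeas_chain 2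
        _ = b * μ S := by rw [hbdef, mul_assoc]
    have hμS : b⁻¹ ≤ μ S := by
      calc b⁻¹ = b⁻¹ * 1 := (mul_one _).symm
        _ ≤ b⁻¹ * (b * μ S) := mul_le_mul_right h3 _
        _ = μ S := by rw [← mul_assoc, ENNReal.inv_mul_cancel hb0 hbtop, one_mul]
    refine le_trans ?_ hμS
    rw [ENNReal.le_inv_iff_mul_le]
    have hbeq : b = ENNReal.ofReal (2 * (N : ℝ)) := by
      rw [hbdef, ENNReal.ofReal_mul (by norm_num), ENNReal.ofReal_natCast,
        ENNReal.ofReal_ofNat]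
    rw [hbeq, ← ENNReal.ofReal_mul (mul_nonneg hcpos.le (pow_nonneg hε.le _))]
    calc ENNReal.ofReal (c * ε ^ (n * ℓ) * (2 * (N : ℝ)))
        ≤ ENNReal.ofReal 1 := ENNReal.ofReal_le_ofReal hq
      _ = 1 := ENNReal.ofReal_one
  refine ⟨min D (min 1 (D ^ ℓ)), lt_min hDpos (lt_min one_pos (pow_pos hDpos _)),
    c, hcpos, ?_⟩
  intro ε hε hεlt
  have hεD : ε < D := lt_of_lt_of_le hεlt (min_le_left _ _)
  have hεDl : ε < D ^ ℓ :=
    lt_of_lt_of_le hεlt (le_trans (min_le_right _ _) (min_le_right _ _))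
  constructor
  · exact key ε hε hεD
  · set ε' : ℝ := ε ^ ((1 : ℝ) / (ℓ : ℝ)) with hε'def
    have hℓ0 : ((ℓ : ℕ) : ℝ) ≠ 0 := by
      have h : ℓ ≠ 0 := by omega
      exact_mod_cast h
    have hε'pos : 0 < ε' := Real.rpow_pos_of_pos hε _
    have hε'pow : ε' ^ ℓ = ε := by
      rw [hε'def, ← Real.rpow_natCast (ε ^ ((1 : ℝ) / (ℓ : ℝ))) ℓ, ← Real.rpow_mul hε.le,
        one_div, inv_mul_cancel₀ hℓ0, Real.rpow_one]
    have hε'D : ε' < D := by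
      by_contra hcon
      push_neg at hcon
      have h1 : D ^ ℓ ≤ ε' ^ ℓ := pow_le_pow_left₀ hDpos.le hcon ℓ
      rw [hε'pow] at h1
      exact absurd hεDl (not_lt.2 h1)
    have hkey := key ε' hε'pos hε'D
    have hss : {x : XSpace n | beta ℓ x ≤ ε'} ⊆
        {x : XSpace n | (∏ j ∈ Finset.Icc 1 ℓ, beta j x) ≤ ε} := by
      intro x hx
      have h1 : ∏ j ∈ Finset.Icc 1 ℓ, beta j x ≤ ∏ _j ∈ Finset.Icc 1 ℓ, ε' := by
        apply Finset.prod_le_prod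
        · intro j _
          exact Stmt9Aux.beta_nonneg j x
        · intro j hj
          rw [Finset.mem_Icc] at hj
          calc beta j x ≤ beta ℓ x := Stmt9Aux.beta_mono hj.2 hℓn.le x
            _ ≤ ε' := hx
      rw [Finset.prod_const, Nat.card_Icc] at h1
      simp only [Nat.add_sub_cancel] at h1
      show (∏ j ∈ Finset.Icc 1 ℓ, beta j x) ≤ ε
      calc (∏ j ∈ Finset.Icc 1 ℓ, beta j x) ≤ ε' ^ ℓ := h1
        _ = ε := hε'pow
    have heq : c * ε ^ n = c * ε' ^ (n * ℓ) := by
      congr 1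
      rw [hε'def, ← Real.rpow_natCast (ε ^ ((1 : ℝ) / (ℓ : ℝ))) (n * ℓ),
        ← Real.rpow_mul hε.le]
      rw [show (1 : ℝ) / (ℓ : ℝ) * ((n * ℓ : ℕ) : ℝ) = (n : ℝ) by
        push_cast
        field_simp]
      rw [Real.rpow_natCast]
    rw [heq]
    exact le_trans hkey (measure_mono hss)

/-- For every integer `1 ≤ ℓ ≤ n−1` there are `ε₀ = ε₀(n,ℓ) > 0` and
`c = c(n,ℓ) > 0` such that for every `ε ∈ (0, ε₀)`,
`c · ε^{nℓ} ≤ μ_X({Λ : β_ℓ(Λ) ≤ ε})` and `c · ε^n ≤ μ_X({Λ : ∏_{j=1}^ℓ β_j(Λ) ≤ ε})`. -/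
theorem stmt9 (n : ℕ) (hn : 3 ≤ n)
    (μ : Measure (XSpace n)) [IsProbabilityMeasure μ]
    (hinv : ∀ (g : Matrix.SpecialLinearGroup (Fin n) ℝ) (s : Set (XSpace n)),
      MeasurableSet s → μ ((fun x => xmul x g) ⁻¹' s) = μ s)
    (ℓ : ℕ) (hℓ1 : 1 ≤ ℓ) (hℓ2 : ℓ ≤ n - 1) :
    ∃ ε₀ : ℝ, 0 < ε₀ ∧ ∃ c : ℝ, 0 < c ∧ ∀ ε : ℝ, 0 < ε → ε < ε₀ →
      ENNReal.ofReal (c * ε ^ (n * ℓ)) ≤ μ {x : XSpace n | beta ℓ x ≤ ε} ∧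
      ENNReal.ofReal (c * ε ^ n) ≤
        μ {x : XSpace n | (∏ j ∈ Finset.Icc 1 ℓ, beta j x) ≤ ε} :=
  stmt9' n hn μ hinv ℓ hℓ1 hℓ2
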